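/- Let Γ be a finite simple graph on v ≥ 3 vertices that is not a complete multipartite graph. Let k̄ := 2|E(Γ)|/v be its average degree and let λ̄ := (Σ_{{x,y}∈E(Γ)} |N(x)∩N(y)|)/|E(Γ)| be the average, over all edges, of the number of common neighbours of the two endpoints. Then v + λ̄ − 2k̄ > 0. -/

import Mathlib

open scoped Classical
open Matrix

variable {V : Type*}

/-- `G` is edge-regular with parameters `(v, k, l)`: it has `v` vertices, every vertex has
degree `k`, and every pair of adjacent vertices has exactly `l` common neighbours. -/
def IsEdgeRegular [Fintype V] (G : SimpleGraph V) (v k l : ℕ) : Prop :=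
  Fintype.card V = v ∧ G.IsRegularOfDegree k ∧
    ∀ x y : V, G.Adj x y → Fintype.card (G.commonNeighbors x y) = l

/-- `C` is an `e`-regular clique of `G` (for `e > 0`): a clique such that every vertex
outside `C` is adjacent to exactly `e` vertices of `C`. -/
def IsRegularCliqueWith [Fintype V] (G : SimpleGraph V) (C : Finset V) (e : ℕ) : Prop :=
  G.IsClique ↑C ∧ 0 < e ∧ ∀ x : V, x ∉ C → (C.filter (fun y => G.Adj x y)).card = e

/-- A Neumaier graph: a non-complete edge-regular graph containing a regular clique. -/
def IsNeumaier [Fintype V] (G : SimpleGraph V) : Prop :=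
  (∃ v k l : ℕ, IsEdgeRegular G v k l) ∧ G ≠ ⊤ ∧ ∃ (C : Finset V) (e : ℕ), IsRegularCliqueWith G C e

/-- A graph is complete multipartite when non-adjacency (together with equality) is
a transitive relation on the vertices. -/
def IsCompleteMultipartite (G : SimpleGraph V) : Prop :=
  ∀ x y z : V, ¬G.Adj x y → ¬G.Adj y z → ¬G.Adj x z

/-- `θ` is a (real) eigenvalue of the adjacency matrix of `G`. -/
def IsAdjEigenvalue [Fintype V] (G : SimpleGraph V) (θ : ℝ) : Prop :=
  ∃ f : V → ℝ, f ≠ 0 ∧ G.adjMatrix ℝ *ᵥ f = θ • f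

/-- The average, over all edges of `G`, of the number of common neighbours of the
two endpoints of the edge. -/
noncomputable def avgLambda [Fintype V] (G : SimpleGraph V) : ℝ :=
  (∑ ed ∈ G.edgeFinset, Sym2.lift
      ⟨fun x y => ((G.commonNeighbors x y).ncard : ℝ),
       fun x y => by dsimp only; rw [SimpleGraph.commonNeighbors_symm]⟩ ed) / (G.edgeFinset.card : ℝ)

open Finset SimpleGraph

private lemma sum_dart_edge' [Fintype V] (G : SimpleGraph V) (F : Sym2 V → ℝ) :
    ∑ d : G.Dart, F d.edge = 2 * ∑ e ∈ G.edgeFinset, F e := by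
  rw [← Finset.sum_fiberwise_of_maps_to (g := SimpleGraph.Dart.edge)
      (fun (d : G.Dart) (_ : d ∈ Finset.univ) => mem_edgeFinset.mpr d.edge_mem), Finset.mul_sum]
  refine Finset.sum_congr rfl fun e he => ?_
  rw [Finset.sum_congr rfl (fun d hd => show F d.edge = F e by
        rw [(Finset.mem_filter.mp hd).2]),
      Finset.sum_const]
  have h2 : #(Finset.univ.filter fun d : G.Dart => d.edge = e) = 2 := by
    have := G.dart_edge_fiber_card e (mem_edgeFinset.mp he)
    convert this using 2
  rw [h2]; simp [two_smul, two_mul]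

private lemma sum_dart_fst' [Fintype V] (G : SimpleGraph V) :
    ∑ d : G.Dart, (G.degree d.fst : ℝ) = ∑ v, (G.degree v : ℝ) ^ 2 := by
  rw [← Finset.sum_fiberwise_of_maps_to (g := fun d : G.Dart => d.fst)
      (fun (d : G.Dart) _ => Finset.mem_univ _)]
  refine Finset.sum_congr rfl fun v _ => ?_
  rw [Finset.sum_congr rfl (fun d hd => show (G.degree d.fst : ℝ) = G.degree v by
        rw [(Finset.mem_filter.mp hd).2]), Finset.sum_const]
  have h2 : #(Finset.univ.filter fun d : G.Dart => d.fst = v) = G.degree v := by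
    have := G.dart_fst_fiber_card_eq_degree v
    convert this using 2
  rw [h2]; simp [sq, nsmul_eq_mul]

private lemma sum_dart_snd' [Fintype V] (G : SimpleGraph V) :
    ∑ d : G.Dart, (G.degree d.snd : ℝ) = ∑ d : G.Dart, (G.degree d.fst : ℝ) := by
  have h := Function.Bijective.sum_comp (Dart.symm_involutive (G := G)).bijective
    (fun d => (G.degree d.fst : ℝ))
  calc ∑ d : G.Dart, (G.degree d.snd : ℝ) = ∑ d : G.Dart, (G.degree d.symm.fst : ℝ) := rfl
    _ = _ := h

private lemma common_eq_real' [Fintype V] (G : SimpleGraph V) (x y : V) :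
    ((G.commonNeighbors x y).ncard : ℝ) =
      (G.degree x : ℝ) + G.degree y - ((G.neighborFinset x ∪ G.neighborFinset y).card : ℝ) := by
  have hfin : (G.commonNeighbors x y).toFinset = G.neighborFinset x ∩ G.neighborFinset y := by
    ext a
    simp [SimpleGraph.mem_commonNeighbors, SimpleGraph.mem_neighborFinset]
  have hcard : (G.neighborFinset x ∩ G.neighborFinset y).card
      + (G.neighborFinset x ∪ G.neighborFinset y).card = G.degree x + G.degree y := by
    rw [Finset.card_inter_add_card_union]; rfl
  have hn : (G.commonNeighbors x y).ncard = (G.neighborFinset x ∩ G.neighborFinset y).card := by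
    rw [Set.ncard_eq_toFinset_card', hfin]
  rw [hn]
  have := congrArg (fun k : ℕ => (k : ℝ)) hcard
  push_cast at this ⊢
  linarith

/-- For a graph on `v ≥ 3` vertices that is not complete multipartite, with
average degree `k̄ = 2|E|/v` and average number `λ̄` of common neighbours of the endpoints of
an edge, we have `v + λ̄ - 2k̄ > 0`. -/
theorem stmt10 [Fintype V] (G : SimpleGraph V)
    (hv : 3 ≤ Fintype.card V) (hncm : ¬ _root_.IsCompleteMultipartite G) :
    (Fintype.card V : ℝ) + avgLambda G
      - 2 * (2 * (G.edgeFinset.card : ℝ) / (Fintype.card V : ℝ)) > 0 := by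
  unfold _root_.IsCompleteMultipartite at hncm
  push_neg at hncm
  obtain ⟨x, y, z, hxy, hyz, hxz⟩ := hncm
  set n : ℝ := (Fintype.card V : ℝ) with hn
  set m : ℝ := (G.edgeFinset.card : ℝ) with hmdef
  set L : Sym2 V → ℝ := Sym2.lift
      ⟨fun x y => ((G.commonNeighbors x y).ncard : ℝ),
       fun x y => by dsimp only; rw [SimpleGraph.commonNeighbors_symm]⟩ with hL
  set D : Sym2 V → ℝ := Sym2.lift
      ⟨fun a b => (G.degree a : ℝ) + G.degree b, fun a b => by dsimp only; ring⟩ with hD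
  have he₀ : s(x, z) ∈ G.edgeFinset := mem_edgeFinset.mpr hxz
  have hmpos : 0 < m := by
    have h : 0 < G.edgeFinset.card := Finset.card_pos.mpr ⟨_, he₀⟩
    rw [hmdef]; exact_mod_cast h
  have hnpos : (3 : ℝ) ≤ n := by rw [hn]; exact_mod_cast hv
  -- sum of D over edges = sum of squared degrees
  have hDsum : ∑ e ∈ G.edgeFinset, D e = ∑ v, (G.degree v : ℝ) ^ 2 := by
    have h1 := sum_dart_edge' G D
    have h2 : ∀ d : G.Dart, D d.edge = (G.degree d.fst : ℝ) + G.degree d.snd := fun d => rfl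
    rw [Finset.sum_congr rfl (fun d _ => h2 d), Finset.sum_add_distrib,
      sum_dart_snd', sum_dart_fst'] at h1
    linarith
  -- union card bound, generic edges
  have hpoint : ∀ e ∈ G.edgeFinset, D e - n ≤ L e := by
    intro e he
    induction e using Sym2.ind with
    | _ a b =>
      have : ((G.neighborFinset a ∪ G.neighborFinset b).card : ℝ) ≤ n := by
        rw [hn]; exact_mod_cast Finset.card_le_univ _
      have hc := common_eq_real' G a b
      simp only [hL, hD, Sym2.lift_mk]
      linarith
  -- special edge
  have hspecial : D s(x, z) - n + 1 ≤ L s(x, z) := by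
    have hyu : y ∉ G.neighborFinset x ∪ G.neighborFinset z := by
      simp only [Finset.mem_union, SimpleGraph.mem_neighborFinset]
      push_neg
      exact ⟨hxy, fun h => hyz h.symm⟩
    have hsub : G.neighborFinset x ∪ G.neighborFinset z ⊆ Finset.univ.erase y :=
      fun a ha => Finset.mem_erase.mpr ⟨fun h => hyu (h ▸ ha), Finset.mem_univ _⟩
    have hcard : ((G.neighborFinset x ∪ G.neighborFinset z).card : ℝ) ≤ n - 1 := by
      have h1 : (G.neighborFinset x ∪ G.neighborFinset z).card ≤ Fintype.card V - 1 := by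
        have := Finset.card_le_card hsub
        rwa [Finset.card_erase_of_mem (Finset.mem_univ _), Finset.card_univ] at this
      have h2 : (1 : ℕ) ≤ Fintype.card V := by omega
      rw [hn]
      have := (Nat.cast_le (α := ℝ)).mpr h1
      rwa [Nat.cast_sub h2, Nat.cast_one] at this
    have hc := common_eq_real' G x z
    simp only [hL, hD, Sym2.lift_mk]
    linarith
  -- sum lower bound
  have hS : ∑ e ∈ G.edgeFinset, D e - n * m + 1 ≤ ∑ e ∈ G.edgeFinset, L e := by
    rw [← Finset.add_sum_erase _ L he₀, ← Finset.add_sum_erase _ D he₀]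
    have h1 : ∑ e ∈ G.edgeFinset.erase s(x, z), (D e - n) ≤
        ∑ e ∈ G.edgeFinset.erase s(x, z), L e :=
      Finset.sum_le_sum fun e he => hpoint e (Finset.mem_of_mem_erase he)
    have h2 : ∑ e ∈ G.edgeFinset.erase s(x, z), (D e - n) =
        ∑ e ∈ G.edgeFinset.erase s(x, z), D e - n * (m - 1) := by
      rw [Finset.sum_sub_distrib, Finset.sum_const, Finset.card_erase_of_mem he₀]
      have : ((G.edgeFinset.card - 1 : ℕ) : ℝ) = m - 1 := by
        have h2 : (1 : ℕ) ≤ G.edgeFinset.card := Finset.card_pos.mpr ⟨_, he₀⟩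
        rw [hmdef, Nat.cast_sub h2, Nat.cast_one]
      rw [nsmul_eq_mul, this]
      ring
    rw [h2] at h1
    linarith
  -- Cauchy-Schwarz
  have hCS : (2 * m) ^ 2 ≤ n * ∑ v, (G.degree v : ℝ) ^ 2 := by
    have h1 := sq_sum_le_card_mul_sum_sq (s := (Finset.univ : Finset V))
      (f := fun v => (G.degree v : ℝ))
    have h2 : ∑ v, (G.degree v : ℝ) = 2 * m := by
      have := G.sum_degrees_eq_twice_card_edges
      have := congrArg (fun k : ℕ => (k : ℝ)) this
      push_cast at this
      rw [hmdef]; linarith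
    rwa [h2, Finset.card_univ, ← hn] at h1
  set S : ℝ := ∑ e ∈ G.edgeFinset, L e with hSdef
  set Q : ℝ := ∑ v, (G.degree v : ℝ) ^ 2 with hQdef
  rw [hDsum] at hS
  have key : 0 < n ^ 2 * m + S * n - 4 * m ^ 2 := by
    nlinarith [mul_le_mul_of_nonneg_right hS (by linarith : (0:ℝ) ≤ n), hCS]
  have heq : n + avgLambda G - 2 * (2 * m / n) = (n ^ 2 * m + S * n - 4 * m ^ 2) / (m * n) := by
    unfold avgLambda
    rw [← hL, ← hSdef, ← hmdef]
    field_simp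
    ring
  rw [gt_iff_lt, heq]
  exact div_pos key (by positivity)
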